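/- For integers H ≥ 1 and d ≥ 1, #T^{sn}_{=H,≤d} = Γ(d)^{-H} · ∏_{i=1}^H Γ(d+H−i+1)/Γ(H−i+2), equivalently ∏_{i=1}^H C(d+H−i, H−i+1) = ∏_{i=1}^H ( (d+i−1)! / ( i! · (d−1)! ) ). -/

import Mathlib

open Finset

lemma key_prod (H d : ℕ) (hd : 1 ≤ d) :
    ((∏ i ∈ Icc 1 H, Nat.choose (d + H - i) (H - i + 1) : ℕ) : ℝ) =
      ∏ i ∈ Icc 1 H,
        ((d + H - i).factorial : ℝ) / ((H - i + 1).factorial * (d - 1).factorial) := by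
  push_cast
  refine Finset.prod_congr rfl fun i hi => ?_
  simp only [mem_Icc] at hi
  have hle : H - i + 1 ≤ d + H - i := by omega
  rw [Nat.cast_choose ℝ hle, show d + H - i - (H - i + 1) = d - 1 from by omega]

open Finset in
/-- For `H ≥ 1`, `d ≥ 1`:
`#T^{sn}_{=H,≤d} = ∏_{i=1}^H C(d+H−i, H−i+1) = Γ(d)^{-H} · ∏_{i=1}^H Γ(d+H−i+1)/Γ(H−i+2)`,
equivalently `∏_{i=1}^H C(d+H−i, H−i+1) = ∏_{i=1}^H (d+i−1)! / (i!·(d−1)!)`. -/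
theorem stmt_16 (H d : ℕ) (hH : 1 ≤ H) (hd : 1 ≤ d) :
    ((∏ i ∈ Icc 1 H, Nat.choose (d + H - i) (H - i + 1) : ℕ) : ℝ) =
        Real.Gamma d ^ (-(H : ℤ)) *
          ∏ i ∈ Icc 1 H, Real.Gamma (d + H - i + 1) / Real.Gamma ((H : ℝ) - i + 2) ∧
      ((∏ i ∈ Icc 1 H, Nat.choose (d + H - i) (H - i + 1) : ℕ) : ℝ) =
        ∏ i ∈ Icc 1 H,
          ((d + i - 1).factorial : ℝ) / (i.factorial * (d - 1).factorial) := by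
  have hGd : Real.Gamma d = ((d - 1).factorial : ℝ) := by
    rw [show (d : ℝ) = ((d - 1 : ℕ) : ℝ) + 1 by push_cast [Nat.cast_sub hd]; ring,
      Real.Gamma_nat_eq_factorial]
  constructor
  · rw [key_prod H d hd, hGd]
    have hne : ((d - 1).factorial : ℝ) ≠ 0 := by positivity
    rw [zpow_neg, zpow_natCast, eq_comm, inv_mul_eq_iff_eq_mul₀ (by positivity)]
    have hpow : ((d - 1).factorial : ℝ) ^ H = ∏ _i ∈ Icc 1 H, ((d - 1).factorial : ℝ) := by
      rw [Finset.prod_const]; congr 1; simp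
    rw [hpow, ← Finset.prod_mul_distrib]
    refine Finset.prod_congr rfl fun i hi => ?_
    simp only [mem_Icc] at hi
    have h1 : (d : ℝ) + H - i + 1 = ((d + H - i : ℕ) : ℝ) + 1 := by
      have : (i : ℝ) ≤ (H : ℝ) := by exact_mod_cast hi.2
      push_cast [Nat.cast_sub (by omega : i ≤ d + H)]; ring
    have h2 : (H : ℝ) - i + 2 = ((H - i + 1 : ℕ) : ℝ) + 1 := by
      push_cast [Nat.cast_sub hi.2]; ring
    rw [h1, h2, Real.Gamma_nat_eq_factorial, Real.Gamma_nat_eq_factorial]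
    field_simp
  · rw [key_prod H d hd]
    refine Finset.prod_nbij' (fun i => H + 1 - i) (fun i => H + 1 - i) ?_ ?_ ?_ ?_ ?_ <;>
      intro i hi <;> simp only [mem_Icc] at hi ⊢
    · omega
    · omega
    · omega
    · omega
    · rw [show d + (H + 1 - i) - 1 = d + H - i from by omega,
        show H + 1 - i = H - i + 1 from by omega]
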